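/- For the cycle graph C_5 with vertices v1,...,v5 (in cyclic order) and single-peaked preferences, the sequential Pareto rule with checking order v1, v2, v5, v3, v4 is a false-name-proof and Pareto efficient social choice function. -/

import Mathlib

namespace FNPFL

variable {V : Type*}

/-- Single-peaked Pareto domination: `v` dominates `w` under profile `θ`
(agents prefer smaller distance). -/
def Dom (d : V → V → ℕ) (θ : Multiset V) (v w : V) : Prop :=
  (∀ i ∈ θ, d i v ≤ d i w) ∧ ∃ i ∈ θ, d i v < d i w

/-- `w` is Pareto efficient under `θ` (single-peaked). -/
def IsPE (d : V → V → ℕ) (θ : Multiset V) (w : V) : Prop :=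
  ∀ v, ¬ Dom d θ v w

/-- A social choice function is Pareto efficient (single-peaked). -/
def ParetoEfficient (d : V → V → ℕ) (f : Multiset V → V) : Prop :=
  ∀ θ : Multiset V, θ ≠ 0 → IsPE d θ (f θ)

/-- False-name-proofness (single-peaked): an agent `i ∈ θ` replaces her report by
any nonempty multiset `fake` of reports (a misreport plus possibly extra fake
identities) and cannot obtain an outcome strictly closer to her true location. -/
def FalseNameProof [DecidableEq V] (d : V → V → ℕ) (f : Multiset V → V) : Prop :=
  ∀ θ : Multiset V, ∀ i ∈ θ, ∀ fake : Multiset V, fake ≠ 0 →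
    d i (f θ) ≤ d i (f (θ.erase i + fake))

/-- Truthfulness (single-peaked): no agent benefits by a single misreport. -/
def Truthful [DecidableEq V] (d : V → V → ℕ) (f : Multiset V → V) : Prop :=
  ∀ θ : Multiset V, ∀ i ∈ θ, ∀ x : V,
    d i (f θ) ≤ d i (f (θ.erase i + {x}))

/-- `f` is the sequential Pareto rule with ordering `σ` (single-peaked):
on every nonempty profile it outputs the first Pareto efficient vertex in `σ`. -/
def SeqParetoRule (d : V → V → ℕ) (σ : List V) (f : Multiset V → V) : Prop :=
  ∀ θ : Multiset V, θ ≠ 0 →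
    ∃ l₁ l₂, σ = l₁ ++ f θ :: l₂ ∧ IsPE d θ (f θ) ∧ ∀ u ∈ l₁, ¬ IsPE d θ u

/-- Single-dipped Pareto domination: `v` dominates `w` under `θ`
(agents prefer larger distance). -/
def DomD (d : V → V → ℕ) (θ : Multiset V) (v w : V) : Prop :=
  (∀ i ∈ θ, d i w ≤ d i v) ∧ ∃ i ∈ θ, d i w < d i v

/-- `w` is Pareto efficient under `θ` (single-dipped). -/
def IsPED (d : V → V → ℕ) (θ : Multiset V) (w : V) : Prop :=
  ∀ v, ¬ DomD d θ v w

/-- Pareto efficiency of an SCF (single-dipped). -/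
def ParetoEfficientD (d : V → V → ℕ) (f : Multiset V → V) : Prop :=
  ∀ θ : Multiset V, θ ≠ 0 → IsPED d θ (f θ)

/-- False-name-proofness (single-dipped): no agent can obtain an outcome strictly
farther from her true location by misreporting and/or adding fake identities. -/
def FalseNameProofD [DecidableEq V] (d : V → V → ℕ) (f : Multiset V → V) : Prop :=
  ∀ θ : Multiset V, ∀ i ∈ θ, ∀ fake : Multiset V, fake ≠ 0 →
    d i (f (θ.erase i + fake)) ≤ d i (f θ)

/-- Sequential Pareto rule with ordering `σ` (single-dipped). -/
def SeqParetoRuleD (d : V → V → ℕ) (σ : List V) (f : Multiset V → V) : Prop :=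
  ∀ θ : Multiset V, θ ≠ 0 →
    ∃ l₁ l₂, σ = l₁ ++ f θ :: l₂ ∧ IsPED d θ (f θ) ∧ ∀ u ∈ l₁, ¬ IsPED d θ u

/-- Graph distance on the cycle `C_k` with vertices `ZMod k`. -/
def cycleDist (k : ℕ) (v w : ZMod k) : ℕ := min (v - w).val (w - v).val

/-- Manhattan (= graph) distance on a 2-dimensional grid. -/
def gridDist {l m : ℕ} (u v : Fin l × Fin m) : ℕ :=
  Nat.dist u.1.val v.1.val + Nat.dist u.2.val v.2.val

end FNPFL

open FNPFL

/-- Pareto efficiency on supports (Finsets). -/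
def PEset (S : Finset (ZMod 5)) (w : ZMod 5) : Prop :=
  ∀ v : ZMod 5, ¬((∀ i ∈ S, cycleDist 5 i v ≤ cycleDist 5 i w) ∧
    ∃ i ∈ S, cycleDist 5 i v < cycleDist 5 i w)

instance (S : Finset (ZMod 5)) (w : ZMod 5) : Decidable (PEset S w) := by
  unfold PEset; infer_instance

/-- The first vertex in the order 0,1,4,2,3 that is Pareto efficient for `S`. -/
def outF (S : Finset (ZMod 5)) : ZMod 5 :=
  if PEset S 0 then 0 else if PEset S 1 then 1 else if PEset S 4 then 4
    else if PEset S 2 then 2 else 3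

lemma first_unique {α : Type*} (P : α → Prop) :
    ∀ (l₁ m₁ : List α) (a b : α) (l₂ m₂ : List α),
      l₁ ++ a :: l₂ = m₁ ++ b :: m₂ → P a → P b →
      (∀ u ∈ l₁, ¬P u) → (∀ u ∈ m₁, ¬P u) → a = b := by
  intro l₁
  induction l₁ with
  | nil =>
    intro m₁ a b l₂ m₂ h ha hb hl hm
    cases m₁ with
    | nil => exact (List.cons.injEq _ _ _ _ ▸ h).1
    | cons c m' =>
      exfalso
      have : a = c := (List.cons.injEq _ _ _ _ ▸ h).1
      exact hm c (by simp) (this ▸ ha)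
  | cons d l' ih =>
    intro m₁ a b l₂ m₂ h ha hb hl hm
    cases m₁ with
    | nil =>
      exfalso
      have : d = b := (List.cons.injEq _ _ _ _ ▸ h).1
      exact hl d (by simp) (this ▸ hb)
    | cons c m' =>
      have h2 : l' ++ a :: l₂ = m' ++ b :: m₂ := (List.cons.injEq _ _ _ _ ▸ h).2
      exact ih m' a b l₂ m₂ h2 ha hb (fun u hu => hl u (by simp [hu]))
        (fun u hu => hm u (by simp [hu]))

lemma isPE_iff (θ : Multiset (ZMod 5)) (w : ZMod 5) :
    IsPE (cycleDist 5) θ w ↔ PEset θ.toFinset w := by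
  unfold IsPE Dom PEset
  simp only [Multiset.mem_toFinset]

lemma f_eq_outF {f : Multiset (ZMod 5) → ZMod 5}
    (hf : SeqParetoRule (cycleDist 5) [0, 1, 4, 2, 3] f)
    (θ : Multiset (ZMod 5)) (hθ : θ ≠ 0) : f θ = outF θ.toFinset := by
  obtain ⟨l₁, l₂, hσ, hpe, hl⟩ := hf θ hθ
  have hfPE : PEset θ.toFinset (f θ) := (isPE_iff θ (f θ)).mp hpe
  have hl' : ∀ u ∈ l₁, ¬ PEset θ.toFinset u :=
    fun u hu hp => hl u hu ((isPE_iff θ u).mpr hp)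
  unfold outF
  split_ifs with h0 h1 h4 h2
  · exact first_unique (PEset θ.toFinset) l₁ [] (f θ) 0 l₂ [1,4,2,3] hσ.symm hfPE h0 hl'
      (by simp)
  · exact first_unique (PEset θ.toFinset) l₁ [0] (f θ) 1 l₂ [4,2,3] hσ.symm hfPE h1 hl'
      (by simpa using h0)
  · exact first_unique (PEset θ.toFinset) l₁ [0,1] (f θ) 4 l₂ [2,3] hσ.symm hfPE h4 hl'
      (by simp_all)
  · exact first_unique (PEset θ.toFinset) l₁ [0,1,4] (f θ) 2 l₂ [3] hσ.symm hfPE h2 hl'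
      (by simp_all)
  · have hmem : f θ ∈ ([0, 1, 4, 2, 3] : List (ZMod 5)) := by
      rw [hσ]; exact List.mem_append.2 (Or.inr List.mem_cons_self)
    simp only [List.mem_cons, List.not_mem_nil, or_false] at hmem
    rcases hmem with h | h | h | h | h
    · exact absurd (h ▸ hfPE) h0
    · exact absurd (h ▸ hfPE) h1
    · exact absurd (h ▸ hfPE) h4
    · exact absurd (h ▸ hfPE) h2
    · exact h

lemma key : ∀ S : Finset (ZMod 5), ∀ i ∈ S, ∀ T : Finset (ZMod 5),
    T.Nonempty → S \ {i} ⊆ T → cycleDist 5 i (outF S) ≤ cycleDist 5 i (outF T) := by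
  decide

/-- on `C_5` with single-peaked preferences, the sequential Pareto
rule with checking order `v1, v2, v5, v3, v4` is false-name-proof and Pareto
efficient. (Vertices `v1,…,v5` are `0,…,4 : ZMod 5` in cyclic order.) -/
theorem stmt4 (f : Multiset (ZMod 5) → ZMod 5)
    (hf : SeqParetoRule (cycleDist 5) [0, 1, 4, 2, 3] f) :
    FalseNameProof (cycleDist 5) f ∧ ParetoEfficient (cycleDist 5) f := by
  constructor
  · intro θ i hi fake hfake
    have hθ : θ ≠ 0 := fun h => Multiset.notMem_zero i (h ▸ hi)
    have hθ' : θ.erase i + fake ≠ 0 := by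
      intro h
      exact hfake (Multiset.le_zero.1 (h ▸ Multiset.le_add_left _ _))
    rw [f_eq_outF hf θ hθ, f_eq_outF hf _ hθ']
    apply key θ.toFinset i (Multiset.mem_toFinset.2 hi)
    · obtain ⟨x, hx⟩ := Multiset.exists_mem_of_ne_zero hfake
      exact ⟨x, Multiset.mem_toFinset.2 (Multiset.mem_add.2 (Or.inr hx))⟩
    · intro j hj
      rw [Finset.mem_sdiff, Finset.mem_singleton] at hj
      obtain ⟨hj1, hj2⟩ := hj
      exact Multiset.mem_toFinset.2 (Multiset.mem_add.2
        (Or.inl (Multiset.mem_erase_of_ne hj2 |>.2 (Multiset.mem_toFinset.1 hj1))))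
  · intro θ hθ
    exact (hf θ hθ).choose_spec.choose_spec.2.1
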